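/- Let σ₁₁, σ₁₂, σ₂₁, σ₂₂ be positive real numbers and suppose there exist matrices V, U ∈ ℝ^{2×2} such that the Kronecker product V ⊗ U equals the 4×4 diagonal matrix diag(σ₁₁, σ₁₂, σ₂₁, σ₂₂). Then σ₁₁ · σ₂₂ = σ₁₂ · σ₂₁ (equivalently, σ₁₁/σ₁₂ = σ₂₁/σ₂₂). -/
import Mathlib


open Matrix
open scoped Kronecker

/-- if `V ⊗ U = diag(σ₁₁, σ₁₂, σ₂₁, σ₂₂)` for some `2 × 2` real matrices
`V`, `U` and positive reals `σ₁₁, σ₁₂, σ₂₁, σ₂₂` (the Kronecker product being indexed by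
pairs, with `((i,k),(j,l))`-entry `V i j * U k l`, so the diagonal is listed in the order
`(0,0), (0,1), (1,0), (1,1)`), then `σ₁₁ σ₂₂ = σ₁₂ σ₂₁`. -/
theorem matrix_normal_diag_constraint (σ11 σ12 σ21 σ22 : ℝ)
    (h11 : 0 < σ11) (h12 : 0 < σ12) (h21 : 0 < σ21) (h22 : 0 < σ22)
    (V U : Matrix (Fin 2) (Fin 2) ℝ)
    (h : V ⊗ₖ U = Matrix.diagonal (fun q : Fin 2 × Fin 2 => !![σ11, σ12; σ21, σ22] q.1 q.2)) :
    σ11 * σ22 = σ12 * σ21 := by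
  have e11 := congrFun (congrFun h ((0 : Fin 2), (0 : Fin 2))) ((0 : Fin 2), (0 : Fin 2))
  have e12 := congrFun (congrFun h ((0 : Fin 2), (1 : Fin 2))) ((0 : Fin 2), (1 : Fin 2))
  have e21 := congrFun (congrFun h ((1 : Fin 2), (0 : Fin 2))) ((1 : Fin 2), (0 : Fin 2))
  have e22 := congrFun (congrFun h ((1 : Fin 2), (1 : Fin 2))) ((1 : Fin 2), (1 : Fin 2))
  simp [Matrix.kroneckerMap_apply, Matrix.diagonal] at e11 e12 e21 e22
  rw [← e11, ← e12, ← e21, ← e22]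
  ring
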